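/- For all real ξ with |ξ| < 1, real v₁, v₂, φ, and t > 0, the remainder R := |√(1 + (ξ + 2v₁t)cos(φ + v₂t)) - √(1 + ξ cos φ) - (2v₁t cos φ - ξ v₂ t sin φ)/(2√(1 + ξ cos φ))| satisfies R ≤ C₁ t² + C₂ t³ for constants C₁ = (|ξ|v₂² + 4|v₁v₂|)/(2√(1-|ξ|)) + (|ξ v₂| + 2|v₁|)²/(1-|ξ|)^{3/2} and C₂ = |v₂|³/(24√(1-|ξ|)), provided t is small enough that 1 + (ξ + 2v₁t)cos(φ + v₂t) ≥ 0. -/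

import Mathlib

open Real

lemma sin_lower_aux (x : ℝ) (hx : 0 ≤ x) : x - x^3/6 ≤ Real.sin x := by
  have hder : ∀ y : ℝ, HasDerivAt (fun z : ℝ => Real.sin z - z + z^3/6)
      (Real.cos y - 1 + y^2/2) y := by
    intro y
    have h1 := ((Real.hasDerivAt_sin y).sub (hasDerivAt_id y)).add
      ((hasDerivAt_pow 3 y).div_const 6)
    refine HasDerivAt.congr_deriv h1 ?_
    push_cast; ring
  have hmono : Monotone (fun z : ℝ => Real.sin z - z + z^3/6) := by
    apply monotone_of_deriv_nonneg
    · intro y; exact (hder y).differentiableAt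
    · intro y
      rw [(hder y).deriv]
      have := Real.one_sub_sq_div_two_le_cos (x := y)
      linarith
  have h0 := hmono hx
  simp only [Real.sin_zero] at h0
  norm_num at h0
  linarith

lemma abs_sin_sub_self (x : ℝ) : |Real.sin x - x| ≤ |x|^3/6 := by
  rcases le_or_gt 0 x with hx | hx
  · have h1 : Real.sin x ≤ x := Real.sin_le hx
    have h2 := sin_lower_aux x hx
    rw [abs_of_nonneg hx, abs_of_nonpos (by linarith)]
    linarith
  · have hx' : 0 ≤ -x := by linarith
    have h1 : Real.sin (-x) ≤ -x := Real.sin_le hx'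
    have h2 := sin_lower_aux (-x) hx'
    rw [Real.sin_neg] at h1 h2
    rw [abs_of_neg hx, abs_of_nonneg (by linarith : 0 ≤ Real.sin x - x)]
    nlinarith

set_option maxHeartbeats 1000000 in
theorem taylor_remainder_bound (ξ v₁ v₂ φ t : ℝ) (hξ : |ξ| < 1) (ht : 0 < t)
    (hpos : 0 ≤ 1 + (ξ + 2 * v₁ * t) * Real.cos (φ + v₂ * t)) :
    |Real.sqrt (1 + (ξ + 2 * v₁ * t) * Real.cos (φ + v₂ * t))
        - Real.sqrt (1 + ξ * Real.cos φ)
        - (2 * v₁ * t * Real.cos φ - ξ * v₂ * t * Real.sin φ)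
          / (2 * Real.sqrt (1 + ξ * Real.cos φ))| ≤
      ((|ξ| * v₂ ^ 2 + 4 * |v₁ * v₂|) / (2 * Real.sqrt (1 - |ξ|))
          + (|ξ * v₂| + 2 * |v₁|) ^ 2 / (1 - |ξ|) ^ ((3 : ℝ) / 2)) * t ^ 2
        + (|v₂| ^ 3 / (24 * Real.sqrt (1 - |ξ|))) * t ^ 3 := by
  have hξ1 : 0 < 1 - |ξ| := by linarith
  set h : ℝ := v₂ * t with hh
  have habsh : |h| = |v₂| * t := by rw [hh, abs_mul, abs_of_pos ht]
  have hm2 : |(-2 : ℝ)| = 2 := by norm_num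
  -- trig identities
  have hc1 : Real.cos (φ + h) - Real.cos φ
      = -2 * Real.sin (φ + h/2) * Real.sin (h/2) := by
    rw [Real.cos_sub_cos]; ring_nf
  have hs2 : Real.sin (φ + h/2) - Real.sin φ
      = 2 * Real.sin (h/4) * Real.cos (φ + h/4) := by
    rw [Real.sin_sub_sin]; ring_nf
  have hlip : |Real.cos (φ + h) - Real.cos φ| ≤ |h| := by
    rw [hc1, abs_mul, abs_mul, hm2]
    have h1 := Real.abs_sin_le_one (φ + h/2)
    have h2 := Real.abs_sin_le_abs (x := h/2)
    have h3 : |h/2| = |h|/2 := by rw [abs_div]; norm_num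
    rw [h3] at h2
    have p1 := mul_le_mul h1 h2 (abs_nonneg _) zero_le_one
    linarith
  have e1 : |Real.sin (h/2) - h/2| ≤ |h|^3/48 := by
    have h1 := abs_sin_sub_self (h/2)
    have h3 : |h/2| = |h|/2 := by rw [abs_div]; norm_num
    rw [h3] at h1
    have : (|h|/2)^3/6 = |h|^3/48 := by ring
    linarith
  have e2 : |Real.sin (φ + h/2) - Real.sin φ| ≤ |h|/2 := by
    rw [hs2, abs_mul, abs_mul, abs_two]
    have h1 := Real.abs_cos_le_one (φ + h/4)
    have h2 := Real.abs_sin_le_abs (x := h/4)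
    have h3 : |h/4| = |h|/4 := by rw [abs_div]; norm_num
    rw [h3] at h2
    have p1 := mul_le_mul h2 h1 (abs_nonneg _) (by positivity : (0:ℝ) ≤ |h|/4)
    linarith
  have hEid : Real.cos (φ + h) - Real.cos φ + h * Real.sin φ
      = -2 * Real.sin (φ + h/2) * (Real.sin (h/2) - h/2)
        - h * (Real.sin (φ + h/2) - Real.sin φ) := by
    linear_combination hc1
  have hE : |Real.cos (φ + h) - Real.cos φ + h * Real.sin φ| ≤ h^2/2 + |h|^3/24 := by
    rw [hEid]
    calc |-2 * Real.sin (φ + h/2) * (Real.sin (h/2) - h/2)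
            - h * (Real.sin (φ + h/2) - Real.sin φ)|
        ≤ |-2 * Real.sin (φ + h/2) * (Real.sin (h/2) - h/2)|
          + |h * (Real.sin (φ + h/2) - Real.sin φ)| := abs_sub _ _
      _ ≤ h^2/2 + |h|^3/24 := by
          rw [abs_mul, abs_mul, abs_mul, hm2]
          have h1 := Real.abs_sin_le_one (φ + h/2)
          have h4 : |h| * |Real.sin (φ + h/2) - Real.sin φ| ≤ |h| * (|h|/2) :=
            mul_le_mul_of_nonneg_left e2 (abs_nonneg h)
          have h5 : |h| * (|h|/2) = h^2/2 := by rw [← sq_abs]; ring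
          have p1 := mul_le_mul h1 e1 (abs_nonneg _) zero_le_one
          linarith
  -- setup
  set a : ℝ := 1 + ξ * Real.cos φ with ha_def
  set s : ℝ := Real.sqrt (1 - |ξ|) with hs_def
  have hs0 : 0 < s := Real.sqrt_pos.2 hξ1
  have haS : 1 - |ξ| ≤ a := by
    have h1 : |ξ * Real.cos φ| ≤ |ξ| := by
      rw [abs_mul]
      exact (mul_le_mul_of_nonneg_left (Real.abs_cos_le_one φ) (abs_nonneg ξ)).trans_eq
        (mul_one _)
    have h2 := neg_abs_le (ξ * Real.cos φ)
    rw [ha_def]; linarith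
  have ha0 : 0 < a := lt_of_lt_of_le hξ1 haS
  set sa : ℝ := Real.sqrt a with hsa_def
  have hsa0 : 0 < sa := Real.sqrt_pos.2 ha0
  have hssa : s ≤ sa := Real.sqrt_le_sqrt haS
  set b : ℝ := 1 + (ξ + 2 * v₁ * t) * Real.cos (φ + h) with hb_def
  set sb : ℝ := Real.sqrt b with hsb_def
  have hsb0 : 0 ≤ sb := Real.sqrt_nonneg b
  have hsa2 : sa^2 = a := Real.sq_sqrt ha0.le
  have hsb2 : sb^2 = b := Real.sq_sqrt hpos
  set N : ℝ := 2 * v₁ * t * Real.cos φ - ξ * v₂ * t * Real.sin φ with hN_def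
  have hban : b - a - N = 2 * v₁ * t * (Real.cos (φ + h) - Real.cos φ)
      + ξ * (Real.cos (φ + h) - Real.cos φ + h * Real.sin φ) := by
    rw [hb_def, ha_def, hN_def, hh]; ring
  have hbaid : b - a = ξ * (Real.cos (φ + h) - Real.cos φ)
      + 2 * v₁ * t * Real.cos (φ + h) := by
    rw [hb_def, ha_def]; ring
  have hrpow : (1 - |ξ|) ^ ((3:ℝ)/2) = (1 - |ξ|) * s := by
    rw [hs_def, show (3:ℝ)/2 = 1 + 1/2 by norm_num, Real.rpow_add hξ1, Real.rpow_one,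
      Real.sqrt_eq_rpow]
  clear_value h a s sa b sb N
  -- key algebraic identity
  have hNdiv : N / (2 * sa) * (2 * sa) = N := div_mul_cancel₀ N (by positivity)
  have key : sb - sa - N / (2 * sa) = ((b - a - N) - (sb - sa)^2) / (2 * sa) := by
    rw [eq_div_iff (by positivity : (2:ℝ) * sa ≠ 0)]
    linear_combination hsb2 - hsa2 - hNdiv
  -- numerator bounds
  have hX : |b - a - N| ≤ 2 * |v₁| * |v₂| * t^2 + |ξ| * (v₂^2 * t^2/2 + |v₂|^3 * t^3/24) := by
    rw [hban]
    have t1 : |2 * v₁ * t * (Real.cos (φ + h) - Real.cos φ)|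
        ≤ 2 * |v₁| * |v₂| * t^2 := by
      rw [abs_mul]
      have h2 : |2 * v₁ * t| = 2 * |v₁| * t := by
        rw [abs_mul, abs_mul, abs_two, abs_of_pos ht]
      rw [h2]
      calc 2 * |v₁| * t * |Real.cos (φ + h) - Real.cos φ|
          ≤ 2 * |v₁| * t * |h| := by
            apply mul_le_mul_of_nonneg_left hlip; positivity
        _ = 2 * |v₁| * |v₂| * t^2 := by rw [habsh]; ring
    have h6 : h^2/2 + |h|^3/24 = v₂^2 * t^2/2 + |v₂|^3 * t^3/24 := by
      rw [habsh, hh]; ring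
    have t2 : |ξ * (Real.cos (φ + h) - Real.cos φ + h * Real.sin φ)|
        ≤ |ξ| * (v₂^2 * t^2/2 + |v₂|^3 * t^3/24) := by
      rw [abs_mul, ← h6]
      exact mul_le_mul_of_nonneg_left hE (abs_nonneg ξ)
    calc |2 * v₁ * t * (Real.cos (φ + h) - Real.cos φ)
            + ξ * (Real.cos (φ + h) - Real.cos φ + h * Real.sin φ)|
        ≤ |2 * v₁ * t * (Real.cos (φ + h) - Real.cos φ)|
          + |ξ * (Real.cos (φ + h) - Real.cos φ + h * Real.sin φ)| := abs_add_le _ _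
      _ ≤ _ := add_le_add t1 t2
  have hY : |b - a| ≤ (|ξ * v₂| + 2 * |v₁|) * t := by
    rw [hbaid]
    have A1 : |ξ * (Real.cos (φ + h) - Real.cos φ)| ≤ |ξ| * |h| := by
      rw [abs_mul]; exact mul_le_mul_of_nonneg_left hlip (abs_nonneg ξ)
    have A2 : |2 * v₁ * t * Real.cos (φ + h)| ≤ 2 * |v₁| * t := by
      rw [abs_mul]
      have h2 : |2 * v₁ * t| = 2 * |v₁| * t := by
        rw [abs_mul, abs_mul, abs_two, abs_of_pos ht]
      rw [h2]
      have := mul_le_mul_of_nonneg_left (Real.abs_cos_le_one (φ + h))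
        (by positivity : (0:ℝ) ≤ 2 * |v₁| * t)
      linarith
    calc |ξ * (Real.cos (φ + h) - Real.cos φ) + 2 * v₁ * t * Real.cos (φ + h)|
        ≤ |ξ * (Real.cos (φ + h) - Real.cos φ)| + |2 * v₁ * t * Real.cos (φ + h)| := abs_add_le _ _
      _ ≤ |ξ| * |h| + 2 * |v₁| * t := add_le_add A1 A2
      _ = (|ξ * v₂| + 2 * |v₁|) * t := by rw [habsh, abs_mul]; ring
  -- bound (sb - sa)^2
  have hsq : (sb - sa)^2 * a ≤ (b - a)^2 := by
    have h1 : |sb - sa| * sa ≤ |b - a| := by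
      calc |sb - sa| * sa ≤ |sb - sa| * (sb + sa) := by
            apply mul_le_mul_of_nonneg_left _ (abs_nonneg _)
            linarith
        _ = |(sb - sa) * (sb + sa)| := by
            rw [abs_mul, abs_of_nonneg (by linarith : (0:ℝ) ≤ sb + sa)]
        _ = |b - a| := by
            rw [show (sb - sa) * (sb + sa) = b - a by linear_combination hsb2 - hsa2]
    have h2 := mul_le_mul h1 h1 (by positivity) (abs_nonneg _)
    have e3 : (sb - sa)^2 * a = (|sb - sa| * sa) * (|sb - sa| * sa) := by
      rw [← hsa2, ← sq_abs (sb - sa)]; ring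
    have e4 : (b - a)^2 = |b - a| * |b - a| := by rw [← sq_abs]; ring
    rw [e3, e4]; exact h2
  have hsbsa : (sb - sa)^2 ≤ (|ξ * v₂| + 2 * |v₁|)^2 * t^2 / (1 - |ξ|) := by
    rw [le_div_iff₀ hξ1]
    have h2 : (sb - sa)^2 * (1 - |ξ|) ≤ (sb - sa)^2 * a :=
      mul_le_mul_of_nonneg_left haS (sq_nonneg _)
    have h3 := mul_le_mul hY hY (abs_nonneg _) (by positivity)
    calc (sb - sa)^2 * (1 - |ξ|) ≤ (sb - sa)^2 * a := h2
      _ ≤ (b - a)^2 := hsq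
      _ = |b - a| * |b - a| := by rw [← sq_abs]; ring
      _ ≤ ((|ξ * v₂| + 2 * |v₁|) * t) * ((|ξ * v₂| + 2 * |v₁|) * t) := h3
      _ = (|ξ * v₂| + 2 * |v₁|)^2 * t^2 := by ring
  -- assemble
  have hmain : |sb - sa - N / (2 * sa)| ≤ (|b - a - N| + (sb - sa)^2) / (2 * sa) := by
    rw [key, abs_div, abs_of_pos (by positivity : (0:ℝ) < 2 * sa)]
    have habs2 : |(sb - sa)^2| = (sb - sa)^2 := abs_of_nonneg (sq_nonneg (sb - sa))
    have h7 : |(b - a - N) - (sb - sa)^2| ≤ |b - a - N| + (sb - sa)^2 :=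
      (abs_sub _ _).trans_eq (by rw [habs2])
    gcongr
  have hstep : (|b - a - N| + (sb - sa)^2) / (2 * sa)
      ≤ (|b - a - N| + (sb - sa)^2) / (2 * s) := by
    have hnn : (0:ℝ) ≤ |b - a - N| + (sb - sa)^2 := by positivity
    have h2s : (0:ℝ) < 2 * s := by linarith
    have h2sa : 2 * s ≤ 2 * sa := by linarith
    exact div_le_div_of_nonneg_left hnn h2s h2sa |>.trans_eq rfl
  rw [hrpow]
  have hs0' : s ≠ 0 := ne_of_gt hs0
  set M : ℝ := |ξ * v₂| + 2 * |v₁| with hM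
  have T2 : M^2 * t^2 / (1 - |ξ|) / (2 * s) ≤ M ^ 2 / ((1 - |ξ|) * s) * t ^ 2 := by
    rw [div_div, div_mul_eq_mul_div]
    have hd : (1 - |ξ|) * s ≤ (1 - |ξ|) * (2 * s) := by
      have := mul_le_mul_of_nonneg_left (by linarith : s ≤ 2 * s) hξ1.le
      linarith
    exact div_le_div_of_nonneg_left (by positivity) (by positivity) hd
  have hnum : 2 * |v₁| * |v₂| * t^2 + |ξ| * (v₂^2 * t^2/2 + |v₂|^3 * t^3/24)
      ≤ (|ξ| * v₂ ^ 2 + 4 * |v₁ * v₂|) * t^2 + (|v₂|^3/12) * t^3 := by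
    rw [abs_mul]
    have n1 : (0:ℝ) ≤ |v₁| * |v₂| * t^2 := by positivity
    have n2 : (0:ℝ) ≤ |ξ| * (v₂^2 * t^2) := by positivity
    have n3 : |ξ| * (|v₂|^3 * t^3) ≤ 1 * (|v₂|^3 * t^3) :=
      mul_le_mul_of_nonneg_right hξ.le (by positivity)
    have n4 : (0:ℝ) ≤ |v₂|^3 * t^3 := by positivity
    linarith
  have T1 : (2 * |v₁| * |v₂| * t^2 + |ξ| * (v₂^2 * t^2/2 + |v₂|^3 * t^3/24)) / (2 * s)
      ≤ (|ξ| * v₂ ^ 2 + 4 * |v₁ * v₂|) / (2 * s) * t ^ 2 + |v₂| ^ 3 / (24 * s) * t ^ 3 := by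
    calc (2 * |v₁| * |v₂| * t^2 + |ξ| * (v₂^2 * t^2/2 + |v₂|^3 * t^3/24)) / (2 * s)
        ≤ ((|ξ| * v₂ ^ 2 + 4 * |v₁ * v₂|) * t^2 + (|v₂|^3/12) * t^3) / (2 * s) := by
          gcongr
      _ = (|ξ| * v₂ ^ 2 + 4 * |v₁ * v₂|) / (2 * s) * t ^ 2 + |v₂| ^ 3 / (24 * s) * t ^ 3 := by
          ring
  calc |sb - sa - N / (2 * sa)|
      ≤ (|b - a - N| + (sb - sa)^2) / (2 * s) := hmain.trans hstep
    _ ≤ ((2 * |v₁| * |v₂| * t^2 + |ξ| * (v₂^2 * t^2/2 + |v₂|^3 * t^3/24))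
          + M^2 * t^2 / (1 - |ξ|)) / (2 * s) := by
        gcongr
    _ = (2 * |v₁| * |v₂| * t^2 + |ξ| * (v₂^2 * t^2/2 + |v₂|^3 * t^3/24)) / (2 * s)
          + M^2 * t^2 / (1 - |ξ|) / (2 * s) := add_div _ _ _
    _ ≤ ((|ξ| * v₂ ^ 2 + 4 * |v₁ * v₂|) / (2 * s) * t ^ 2 + |v₂| ^ 3 / (24 * s) * t ^ 3)
          + M ^ 2 / ((1 - |ξ|) * s) * t ^ 2 := add_le_add T1 T2
    _ = ((|ξ| * v₂ ^ 2 + 4 * |v₁ * v₂|) / (2 * s)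
          + M ^ 2 / ((1 - |ξ|) * s)) * t ^ 2
        + (|v₂| ^ 3 / (24 * s)) * t ^ 3 := by ring
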